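/- The only subspaces of Λ that are invariant under all six maps A^{(1)}, A^{(2)}, A^{(3)}, A^{*(1)}, A^{*(2)}, A^{*(3)} are {0} and Λ itself; that is, Λ is an irreducible module for the algebra generated by these six maps. -/

import Mathlib

open Finset

noncomputable section

/-- The `i`-th distance matrix of a graph, as a complex matrix. -/
def distMat {X : Type} [Fintype X] [DecidableEq X] (G : SimpleGraph X) (i : ℕ) : Matrix X X ℂ :=
  Matrix.of (fun x y => if G.dist x y = i then 1 else 0)

/-- The column of a matrix at a vertex `x`, i.e. the image of the standard basis vector `x`. -/
def Ecol {X : Type} (E : Matrix X X ℂ) (x : X) : X → ℂ := fun a => E a x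

/-- The basis vector `x ⊗ y ⊗ z` of `V ⊗ V ⊗ V ≅ ℂ^(X×X×X)`. -/
def basis3 {X : Type} [DecidableEq X] (x y z : X) : X × X × X → ℂ :=
  fun w => (if w.1 = x then 1 else 0) * (if w.2.1 = y then 1 else 0) * (if w.2.2 = z then 1 else 0)

/-- `B(r,s,t,u) = Σ x⊗y⊗z`, summed over the ordered triples `(x,y,z)` with profile
`(r,s,t,u)`, i.e. with `∂(x,y) = s+t`, `∂(y,z) = t+u`, `∂(z,x) = u+s`. -/
def Bvec {X : Type} [Fintype X] [DecidableEq X] (G : SimpleGraph X) (r s t u : ℕ) :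
    X × X × X → ℂ :=
  ∑ w ∈ Finset.univ.filter (fun w : X × X × X =>
      G.dist w.1 w.2.1 = s + t ∧ G.dist w.2.1 w.2.2 = t + u ∧ G.dist w.2.2 w.1 = u + s),
    basis3 w.1 w.2.1 w.2.2

/-- The finset `P_D` of profiles of degree `D`. -/
def profiles (D : ℕ) : Finset (ℕ × ℕ × ℕ × ℕ) :=
  (Finset.range (D + 1) ×ˢ Finset.range (D + 1) ×ˢ Finset.range (D + 1)
      ×ˢ Finset.range (D + 1)).filter
    (fun v => v.1 + v.2.1 + v.2.2.1 + v.2.2.2 = D)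

/-- The Hermitian form on `V^{⊗3}` making the vectors `x⊗y⊗z` orthonormal. -/
def herm {X : Type} [Fintype X] (f g : X × X × X → ℂ) : ℂ :=
  ∑ w : X × X × X, f w * (starRingEnd ℂ) (g w)

/-- `A^{(1)}`: the adjacency map of `Γ` acting on the first tensor factor. -/
def A1op {X : Type} [Fintype X] [DecidableEq X] (G : SimpleGraph X) :
    Matrix (X × X × X) (X × X × X) ℂ :=
  Matrix.of (fun w w' => if G.dist w.1 w'.1 = 1 ∧ w.2.1 = w'.2.1 ∧ w.2.2 = w'.2.2 then 1 else 0)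

/-- `A^{(2)}`: the adjacency map of `Γ` acting on the second tensor factor. -/
def A2op {X : Type} [Fintype X] [DecidableEq X] (G : SimpleGraph X) :
    Matrix (X × X × X) (X × X × X) ℂ :=
  Matrix.of (fun w w' => if w.1 = w'.1 ∧ G.dist w.2.1 w'.2.1 = 1 ∧ w.2.2 = w'.2.2 then 1 else 0)

/-- `A^{(3)}`: the adjacency map of `Γ` acting on the third tensor factor. -/
def A3op {X : Type} [Fintype X] [DecidableEq X] (G : SimpleGraph X) :
    Matrix (X × X × X) (X × X × X) ℂ :=
  Matrix.of (fun w w' => if w.1 = w'.1 ∧ w.2.1 = w'.2.1 ∧ G.dist w.2.2 w'.2.2 = 1 then 1 else 0)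

/-- `A^{*(1)}`: `x⊗y⊗z ↦ θ*_{∂(y,z)} x⊗y⊗z`. -/
def As1op {X : Type} [Fintype X] [DecidableEq X] (G : SimpleGraph X) (θs : ℕ → ℝ) :
    Matrix (X × X × X) (X × X × X) ℂ :=
  Matrix.of (fun w w' => if w = w' then ((θs (G.dist w.2.1 w.2.2) : ℝ) : ℂ) else 0)

/-- `A^{*(2)}`: `x⊗y⊗z ↦ θ*_{∂(z,x)} x⊗y⊗z`. -/
def As2op {X : Type} [Fintype X] [DecidableEq X] (G : SimpleGraph X) (θs : ℕ → ℝ) :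
    Matrix (X × X × X) (X × X × X) ℂ :=
  Matrix.of (fun w w' => if w = w' then ((θs (G.dist w.2.2 w.1) : ℝ) : ℂ) else 0)

/-- `A^{*(3)}`: `x⊗y⊗z ↦ θ*_{∂(x,y)} x⊗y⊗z`. -/
def As3op {X : Type} [Fintype X] [DecidableEq X] (G : SimpleGraph X) (θs : ℕ → ℝ) :
    Matrix (X × X × X) (X × X × X) ℂ :=
  Matrix.of (fun w w' => if w = w' then ((θs (G.dist w.1 w.2.1) : ℝ) : ℂ) else 0)

/-- `Λ`: the subspace of `V^{⊗3}` spanned by the vectors `B(r,s,t,u)`, `(r,s,t,u) ∈ P_D`. -/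
def Lam {X : Type} [Fintype X] [DecidableEq X] (G : SimpleGraph X) (D : ℕ) :
    Submodule ℂ ((X × X × X) → ℂ) :=
  Submodule.span ℂ (Set.range (fun w : {w : ℕ × ℕ × ℕ × ℕ // w ∈ profiles D} =>
    Bvec G w.1.1 w.1.2.1 w.1.2.2.1 w.1.2.2.2))

namespace StmtAux

variable {X : Type} [Fintype X] [DecidableEq X]

def d3 (G : SimpleGraph X) (w : X × X × X) : ℕ × ℕ × ℕ :=
  (G.dist w.1 w.2.1, G.dist w.2.1 w.2.2, G.dist w.2.2 w.1)

lemma basis3_apply (x y z : X) (w : X × X × X) :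
    basis3 x y z w = if w = (x, y, z) then 1 else 0 := by
  obtain ⟨a, b, c⟩ := w
  simp only [basis3, Prod.mk.injEq]
  by_cases h1 : a = x <;> by_cases h2 : b = y <;> by_cases h3 : c = z <;>
    simp [h1, h2, h3]

lemma Bvec_apply (G : SimpleGraph X) (r s t u : ℕ) (w : X × X × X) :
    Bvec G r s t u w = if d3 G w = (s + t, t + u, u + s) then 1 else 0 := by
  unfold Bvec
  rw [Finset.sum_apply]
  have : ∀ w' : X × X × X, basis3 w'.1 w'.2.1 w'.2.2 w = if w = w' then 1 else 0 := by
    intro w'; rw [basis3_apply]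
  simp only [this]
  rw [Finset.sum_ite_eq]
  simp only [Finset.mem_filter, Finset.mem_univ, true_and, d3, Prod.mk.injEq]

lemma lam_const (G : SimpleGraph X) (D : ℕ) {v : X × X × X → ℂ} (hv : v ∈ Lam G D)
    {w w' : X × X × X} (h : d3 G w = d3 G w') : v w = v w' := by
  induction hv using Submodule.span_induction with
  | mem f hf =>
    obtain ⟨π, rfl⟩ := hf
    simp only [Bvec_apply]
    rw [h]
  | zero => rfl
  | add f g _ _ hf hg => simp only [Pi.add_apply, hf, hg]
  | smul c f _ hf => simp only [Pi.smul_apply, hf]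

lemma exists_dist_pred (G : SimpleGraph X) (hconn : G.Connected) {x y : X} {n : ℕ}
    (h : G.dist x y = n + 1) : ∃ z, G.dist x z = n := by
  obtain ⟨p, hp⟩ := hconn.exists_walk_length_eq_dist x y
  rw [h] at hp
  have hp' : p.reverse.length = n + 1 := by rw [SimpleGraph.Walk.length_reverse, hp]
  cases hpr : p.reverse with
  | nil => rw [hpr] at hp'; simp at hp'
  | cons hadj q =>
    rename_i v
    refine ⟨v, ?_⟩
    rw [hpr] at hp'
    simp only [SimpleGraph.Walk.length_cons] at hp'
    have hle : G.dist v x ≤ n := by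
      have := SimpleGraph.dist_le q
      omega
    have hle' : G.dist x v ≤ n := by rwa [SimpleGraph.dist_comm]
    have h1 : G.dist y v = 1 := SimpleGraph.dist_eq_one_iff_adj.mpr hadj
    have htri := hconn.dist_triangle (u := x) (v := v) (w := y)
    have h2 : G.dist v y = 1 := by rwa [SimpleGraph.dist_comm] at h1
    omega

lemma dist_down (G : SimpleGraph X) (hconn : G.Connected) :
    ∀ (k : ℕ) (x y : X), G.dist x y = k → ∀ j ≤ k, ∃ z, G.dist x z = j := by
  intro k
  induction k with
  | zero => intro x y h j hj; interval_cases j; exact ⟨y, h⟩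
  | succ n ih =>
    intro x y h j hj
    rcases Nat.lt_or_ge j (n + 1) with hlt | hge
    · obtain ⟨z, hz⟩ := exists_dist_pred G hconn h
      exact ih x z hz j (Nat.lt_succ_iff.mp hlt)
    · have : j = n + 1 := by omega
      exact ⟨y, this ▸ h⟩

def natAdj (G : SimpleGraph X) : Matrix X X ℕ :=
  Matrix.of (fun x y => if G.dist x y = 1 then 1 else 0)

lemma distMat_pow_eq (G : SimpleGraph X) (j : ℕ) :
    distMat G 1 ^ j = ((natAdj G) ^ j).map (Nat.cast : ℕ → ℂ) := by
  have h1 : distMat G 1 = (Nat.castRingHom ℂ).mapMatrix (natAdj G) := by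
    ext x y
    simp [distMat, natAdj, RingHom.mapMatrix_apply, Matrix.map_apply, apply_ite (Nat.cast : ℕ → ℂ)]
  rw [h1, ← map_pow]
  rfl

lemma natAdj_pow_zero (G : SimpleGraph X) (hconn : G.Connected) :
    ∀ (j : ℕ) (x y : X), j < G.dist x y → ((natAdj G) ^ j) x y = 0 := by
  intro j
  induction j with
  | zero =>
    intro x y h
    have hne : x ≠ y := by
      intro he; rw [he, SimpleGraph.dist_self] at h; omega
    simp [Matrix.one_apply, hne]
  | succ n ih =>
    intro x y h
    rw [pow_succ', Matrix.mul_apply]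
    apply Finset.sum_eq_zero
    intro ξ _
    by_cases hx : G.dist x ξ = 1
    · have htri := hconn.dist_triangle (u := x) (v := ξ) (w := y)
      have : n < G.dist ξ y := by omega
      rw [show natAdj G x ξ = 1 from by simp [natAdj, hx], one_mul]
      exact ih ξ y this
    · rw [show natAdj G x ξ = 0 from by simp [natAdj, hx], zero_mul]

lemma natAdj_pow_pos (G : SimpleGraph X) (hconn : G.Connected) :
    ∀ (j : ℕ) (x y : X), G.dist x y = j → ((natAdj G) ^ j) x y ≠ 0 := by
  intro j
  induction j with
  | zero =>
    intro x y h
    have hxy : x = y := (hconn.dist_eq_zero_iff).mp h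
    subst hxy
    simp [Matrix.one_apply]
  | succ n ih =>
    intro x y h
    obtain ⟨p, hp⟩ := hconn.exists_walk_length_eq_dist x y
    rw [h] at hp
    cases hc : p with
    | nil => rw [hc] at hp; simp at hp
    | cons hadj q =>
      rename_i v
      rw [hc] at hp
      simp only [SimpleGraph.Walk.length_cons] at hp
      have h1 : G.dist x v = 1 := SimpleGraph.dist_eq_one_iff_adj.mpr hadj
      have hle : G.dist v y ≤ n := by
        have := SimpleGraph.dist_le q; omega
      have htri := hconn.dist_triangle (u := x) (v := v) (w := y)
      have hq : G.dist v y = n := by omega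
      rw [pow_succ', Matrix.mul_apply]
      intro hzero
      rw [Finset.sum_eq_zero_iff] at hzero
      have := hzero v (Finset.mem_univ v)
      simp only [natAdj, Matrix.of_apply, h1, if_true, one_mul] at this
      exact ih v y hq this

lemma pow_entry_zero (G : SimpleGraph X) (hconn : G.Connected) {j : ℕ} {x y : X}
    (h : j < G.dist x y) : (distMat G 1 ^ j) x y = 0 := by
  rw [distMat_pow_eq]
  simp [Matrix.map_apply, natAdj_pow_zero G hconn j x y h]

lemma pow_entry_ne (G : SimpleGraph X) (hconn : G.Connected) {j : ℕ} {x y : X}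
    (h : G.dist x y = j) : (distMat G 1 ^ j) x y ≠ 0 := by
  rw [distMat_pow_eq]
  simp only [Matrix.map_apply, ne_eq, Nat.cast_eq_zero]
  exact natAdj_pow_pos G hconn j x y h

lemma pow_expand (G : SimpleGraph X) (D : ℕ) (E : ℕ → Matrix X X ℂ)
    (hEsum : ∑ i ∈ Finset.range (D + 1), E i = 1)
    (θ : ℕ → ℝ)
    (heig : ∀ i : ℕ, i ≤ D → distMat G 1 * E i = (θ i : ℂ) • E i) :
    ∀ n : ℕ, distMat G 1 ^ n = ∑ i ∈ Finset.range (D + 1), ((θ i : ℂ) ^ n) • E i := by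
  intro n
  induction n with
  | zero => simpa using hEsum.symm
  | succ n ih =>
    rw [pow_succ', ih, Finset.mul_sum]
    refine Finset.sum_congr rfl fun i hi => ?_
    have hi' : i ≤ D := by simpa [Nat.lt_succ_iff] using hi
    rw [Matrix.mul_smul, heig i hi', smul_smul, ← pow_succ]

lemma aeval_expand (G : SimpleGraph X) (D : ℕ) (E : ℕ → Matrix X X ℂ)
    (hEsum : ∑ i ∈ Finset.range (D + 1), E i = 1)
    (θ : ℕ → ℝ)
    (heig : ∀ i : ℕ, i ≤ D → distMat G 1 * E i = (θ i : ℂ) • E i)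
    (q : Polynomial ℂ) :
    (Polynomial.aeval (distMat G 1)) q
      = ∑ i ∈ Finset.range (D + 1), (q.eval ((θ i : ℂ))) • E i := by
  induction q using Polynomial.induction_on' with
  | add p q hp hq =>
    rw [map_add, hp, hq, ← Finset.sum_add_distrib]
    refine Finset.sum_congr rfl fun i _ => ?_
    rw [Polynomial.eval_add, add_smul]
  | monomial n a =>
    rw [Polynomial.aeval_monomial, pow_expand G D E hEsum θ heig n, Finset.mul_sum]
    refine Finset.sum_congr rfl fun i _ => ?_
    rw [Polynomial.eval_monomial]
    rw [Matrix.mul_smul, ← Algebra.smul_def, smul_smul, mul_comm]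

theorem theta_inj (G : SimpleGraph X) (hconn : G.Connected) (D : ℕ)
    (hdeq : ∃ x y : X, G.dist x y = D)
    (E : ℕ → Matrix X X ℂ)
    (hEsum : ∑ i ∈ Finset.range (D + 1), E i = 1)
    (θ : ℕ → ℝ)
    (heig : ∀ i : ℕ, i ≤ D → distMat G 1 * E i = (θ i : ℂ) • E i) :
    ∀ i ≤ D, ∀ j ≤ D, θ i = θ j → i = j := by
  intro i hi j hj hij
  by_contra hne
  set A := distMat G 1 with hA
  set S : Finset ℂ := (Finset.range (D + 1)).image (fun k => ((θ k : ℂ))) with hS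
  have hcard : S.card ≤ D := by
    have hsub : S ⊆ ((Finset.range (D + 1)).erase j).image (fun k => ((θ k : ℂ))) := by
      intro v hv
      rw [hS, Finset.mem_image] at hv
      obtain ⟨k, hk, rfl⟩ := hv
      rw [Finset.mem_image]
      by_cases hkj : k = j
      · exact ⟨i, Finset.mem_erase.mpr ⟨hne, Finset.mem_range.mpr (by omega)⟩,
          by rw [hkj]; exact_mod_cast hij⟩
      · exact ⟨k, Finset.mem_erase.mpr ⟨hkj, hk⟩, rfl⟩
    calc S.card ≤ (((Finset.range (D + 1)).erase j).image (fun k => ((θ k : ℂ)))).card :=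
            Finset.card_le_card hsub
      _ ≤ ((Finset.range (D + 1)).erase j).card := Finset.card_image_le
      _ = D := by rw [Finset.card_erase_of_mem (Finset.mem_range.mpr (by omega))]; simp
  set q : Polynomial ℂ := ∏ v ∈ S, (Polynomial.X - Polynomial.C v) with hq
  have hmonic : q.Monic :=
    Polynomial.monic_prod_of_monic _ _ (fun v _ => Polynomial.monic_X_sub_C v)
  have hdeg : q.natDegree = S.card := by
    rw [hq, Polynomial.natDegree_prod_of_monic _ _ (fun v _ => Polynomial.monic_X_sub_C v)]
    simp [Polynomial.natDegree_X_sub_C]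
  have hq0 : Polynomial.aeval A q = 0 := by
    rw [aeval_expand G D E hEsum θ heig]
    apply Finset.sum_eq_zero
    intro k hk
    have hzero : q.eval ((θ k : ℂ)) = 0 := by
      rw [hq, Polynomial.eval_prod]
      refine Finset.prod_eq_zero (i := ((θ k : ℂ))) ?_ (by simp)
      rw [hS, Finset.mem_image]; exact ⟨k, hk, rfl⟩
    rw [hzero, zero_smul]
  obtain ⟨x0, y0, hxy0⟩ := hdeq
  obtain ⟨z, hz⟩ := dist_down G hconn D x0 y0 hxy0 q.natDegree (by omega)
  have hsum := Polynomial.aeval_eq_sum_range (p := q) A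
  rw [hq0] at hsum
  have hentry : (0 : Matrix X X ℂ) x0 z
      = ∑ n ∈ Finset.range (q.natDegree + 1), q.coeff n * (A ^ n) x0 z := by
    rw [hsum, Matrix.sum_apply]
    refine Finset.sum_congr rfl fun n _ => ?_
    rw [Matrix.smul_apply, smul_eq_mul]
  rw [Finset.sum_range_succ] at hentry
  have hlower : ∀ n ∈ Finset.range q.natDegree, q.coeff n * (A ^ n) x0 z = 0 := by
    intro n hn
    rw [pow_entry_zero G hconn (by rw [hz]; exact Finset.mem_range.mp hn), mul_zero]
  rw [Finset.sum_eq_zero hlower, zero_add, hmonic.coeff_natDegree, one_mul] at hentry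
  exact pow_entry_ne G hconn hz hentry.symm

lemma extract {ι : Type} [Fintype ι] [DecidableEq ι] (U : Submodule ℂ (ι → ℂ))
    (g : ι → ℂ) (hg : ∀ u ∈ U, (fun w => g w * u w) ∈ U)
    (T : Finset ℂ) (hT : ∀ w, g w ∈ T) {v : ι → ℂ} (hv : v ∈ U) (c : ℂ) :
    (fun w => if g w = c then v w else 0) ∈ U := by
  have prodmem : ∀ T' : Finset ℂ, (fun w => (∏ t ∈ T', (g w - t)) * v w) ∈ U := by
    intro T'
    induction T' using Finset.induction_on with
    | empty => simpa using hv
    | @insert a T' ha ih =>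
      have h1 := hg _ ih
      have h2 : (a • fun w => (∏ t ∈ T', (g w - t)) * v w) ∈ U := U.smul_mem a ih
      have h3 := U.sub_mem h1 h2
      have he : (fun w => (∏ t ∈ insert a T', (g w - t)) * v w)
          = ((fun w => g w * ((∏ t ∈ T', (g w - t)) * v w))
             - a • fun w => (∏ t ∈ T', (g w - t)) * v w) := by
        funext w
        simp only [Pi.sub_apply, Pi.smul_apply, smul_eq_mul, Finset.prod_insert ha]
        ring
      rw [he]
      exact h3
  by_cases hc : c ∈ T
  · have key := prodmem (T.erase c)
    have hP : (∏ t ∈ T.erase c, (c - t)) ≠ 0 :=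
      Finset.prod_ne_zero_iff.mpr fun t ht => sub_ne_zero.mpr (Ne.symm (Finset.mem_erase.mp ht).1)
    have he : (fun w => if g w = c then v w else 0)
        = (∏ t ∈ T.erase c, (c - t))⁻¹ • fun w => (∏ t ∈ T.erase c, (g w - t)) * v w := by
      funext w
      by_cases h : g w = c
      · rw [if_pos h, Pi.smul_apply, smul_eq_mul, h, ← mul_assoc, inv_mul_cancel₀ hP, one_mul]
      · have hw : g w ∈ T.erase c := Finset.mem_erase.mpr ⟨h, hT w⟩
        rw [if_neg h, Pi.smul_apply, smul_eq_mul,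
          Finset.prod_eq_zero hw (sub_self (g w)), zero_mul, mul_zero]
    rw [he]
    exact U.smul_mem _ key
  · have he : (fun w => if g w = c then v w else 0) = (0 : ι → ℂ) := by
      funext w
      have : g w ≠ c := fun h => hc (h ▸ hT w)
      simp [this]
    rw [he]
    exact U.zero_mem

lemma walk_prop {V : Type} {G : SimpleGraph V} (Q : V → Prop)
    (hstep : ∀ a b, G.Adj a b → Q a → Q b) : ∀ {a b : V}, G.Walk a b → Q a → Q b := by
  intro a b p
  induction p with
  | nil => exact id
  | cons h q ih => exact fun ha => ih (hstep _ _ h ha)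

lemma As1_mulVec (G : SimpleGraph X) (θs : ℕ → ℝ) (v : X × X × X → ℂ) :
    (As1op G θs).mulVec v = fun w => ((θs (G.dist w.2.1 w.2.2) : ℂ)) * v w := by
  funext w
  simp only [Matrix.mulVec, dotProduct, As1op, Matrix.of_apply, ite_mul, zero_mul]
  rw [Finset.sum_ite_eq]
  simp

lemma As2_mulVec (G : SimpleGraph X) (θs : ℕ → ℝ) (v : X × X × X → ℂ) :
    (As2op G θs).mulVec v = fun w => ((θs (G.dist w.2.2 w.1) : ℂ)) * v w := by
  funext w
  simp only [Matrix.mulVec, dotProduct, As2op, Matrix.of_apply, ite_mul, zero_mul]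
  rw [Finset.sum_ite_eq]
  simp

lemma As3_mulVec (G : SimpleGraph X) (θs : ℕ → ℝ) (v : X × X × X → ℂ) :
    (As3op G θs).mulVec v = fun w => ((θs (G.dist w.1 w.2.1) : ℂ)) * v w := by
  funext w
  simp only [Matrix.mulVec, dotProduct, As3op, Matrix.of_apply, ite_mul, zero_mul]
  rw [Finset.sum_ite_eq]
  simp

lemma fiber_restrict (G : SimpleGraph X) (D : ℕ) (θs : ℕ → ℝ)
    (hdle : ∀ x y : X, G.dist x y ≤ D)
    (hinj : ∀ i ≤ D, ∀ j ≤ D, ((θs i : ℂ)) = ((θs j : ℂ)) → i = j)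
    (U : Submodule ℂ ((X × X × X) → ℂ))
    (hU1 : ∀ v ∈ U, (As1op G θs).mulVec v ∈ U)
    (hU2 : ∀ v ∈ U, (As2op G θs).mulVec v ∈ U)
    (hU3 : ∀ v ∈ U, (As3op G θs).mulVec v ∈ U)
    {v : X × X × X → ℂ} (hv : v ∈ U) (t : ℕ × ℕ × ℕ)
    (h1 : t.1 ≤ D) (h2 : t.2.1 ≤ D) (h3 : t.2.2 ≤ D) :
    (fun w => if d3 G w = t then v w else 0) ∈ U := by
  set T : Finset ℂ := (Finset.range (D + 1)).image (fun k => ((θs k : ℂ))) with hT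
  have hmemT : ∀ (k : ℕ), k ≤ D → ((θs k : ℂ)) ∈ T := fun k hk =>
    Finset.mem_image.mpr ⟨k, Finset.mem_range.mpr (by omega), rfl⟩
  have s3 : (fun w => if ((θs (G.dist w.1 w.2.1) : ℂ)) = ((θs t.1 : ℂ)) then v w else 0) ∈ U := by
    refine extract U _ (fun u hu => ?_) T (fun w => hmemT _ (hdle _ _)) hv _
    have hm := hU3 u hu
    rwa [As3_mulVec] at hm
  have s1 : (fun w => if ((θs (G.dist w.2.1 w.2.2) : ℂ)) = ((θs t.2.1 : ℂ)) then
      (if ((θs (G.dist w.1 w.2.1) : ℂ)) = ((θs t.1 : ℂ)) then v w else 0) else 0) ∈ U := by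
    refine extract U _ (fun u hu => ?_) T (fun w => hmemT _ (hdle _ _)) s3 _
    have hm := hU1 u hu
    rwa [As1_mulVec] at hm
  have s2 : (fun w => if ((θs (G.dist w.2.2 w.1) : ℂ)) = ((θs t.2.2 : ℂ)) then
      (if ((θs (G.dist w.2.1 w.2.2) : ℂ)) = ((θs t.2.1 : ℂ)) then
        (if ((θs (G.dist w.1 w.2.1) : ℂ)) = ((θs t.1 : ℂ)) then v w else 0) else 0) else 0) ∈ U := by
    refine extract U _ (fun u hu => ?_) T (fun w => hmemT _ (hdle _ _)) s1 _
    have hm := hU2 u hu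
    rwa [As2_mulVec] at hm
  have key : ∀ a b : ℕ, a ≤ D → b ≤ D → (((θs a : ℂ)) = ((θs b : ℂ)) ↔ a = b) :=
    fun a b ha hb => ⟨fun h => hinj a ha b hb h, fun h => by rw [h]⟩
  have he : (fun w => if d3 G w = t then v w else 0)
      = (fun w => if ((θs (G.dist w.2.2 w.1) : ℂ)) = ((θs t.2.2 : ℂ)) then
      (if ((θs (G.dist w.2.1 w.2.2) : ℂ)) = ((θs t.2.1 : ℂ)) then
        (if ((θs (G.dist w.1 w.2.1) : ℂ)) = ((θs t.1 : ℂ)) then v w else 0) else 0) else 0) := by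
    funext w
    obtain ⟨a, b, c⟩ := t
    simp only [key (G.dist w.2.2 w.1) c (hdle _ _) h3,
      key (G.dist w.2.1 w.2.2) b (hdle _ _) h2,
      key (G.dist w.1 w.2.1) a (hdle _ _) h1, d3, Prod.mk.injEq]
    split_ifs <;> tauto
  rw [he]
  exact s2

lemma ind_mem_of_restrict (G : SimpleGraph X) (D : ℕ)
    (U : Submodule ℂ ((X × X × X) → ℂ)) (hUle : U ≤ Lam G D)
    {u : X × X × X → ℂ} (hu : u ∈ U) (w0 : X × X × X)
    (hres : (fun w => if d3 G w = d3 G w0 then u w else 0) ∈ U)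
    (hne : u w0 ≠ 0) :
    (fun w => if d3 G w = d3 G w0 then (1 : ℂ) else 0) ∈ U := by
  have heq : (fun w => if d3 G w = d3 G w0 then u w else 0)
      = u w0 • fun w => if d3 G w = d3 G w0 then (1 : ℂ) else 0 := by
    funext w
    by_cases h : d3 G w = d3 G w0
    · rw [if_pos h, Pi.smul_apply, if_pos h, smul_eq_mul, mul_one]
      exact lam_const G D (hUle hu) h
    · rw [if_neg h, Pi.smul_apply, if_neg h, smul_eq_mul, mul_zero]
  have hsm := U.smul_mem (u w0)⁻¹ (heq ▸ hres)
  rwa [smul_smul, inv_mul_cancel₀ hne, one_smul] at hsm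

end StmtAux

namespace StmtAux

variable {X : Type} [Fintype X] [DecidableEq X]

lemma move3 (G : SimpleGraph X) (D : ℕ) (θs : ℕ → ℝ)
    (hdle : ∀ x y : X, G.dist x y ≤ D)
    (hinj : ∀ i ≤ D, ∀ j ≤ D, ((θs i : ℂ)) = ((θs j : ℂ)) → i = j)
    (U : Submodule ℂ ((X × X × X) → ℂ)) (hUle : U ≤ Lam G D)
    (hU1 : ∀ v ∈ U, (As1op G θs).mulVec v ∈ U)
    (hU2 : ∀ v ∈ U, (As2op G θs).mulVec v ∈ U)
    (hU3 : ∀ v ∈ U, (As3op G θs).mulVec v ∈ U)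
    (hA3 : ∀ v ∈ U, (A3op G).mulVec v ∈ U)
    (x y z z' : X) (hzz' : G.dist z z' = 1)
    (hP : (fun w => if d3 G w = d3 G (x, y, z) then (1:ℂ) else 0) ∈ U) :
    (fun w => if d3 G w = d3 G (x, y, z') then (1:ℂ) else 0) ∈ U := by
  set u := (A3op G).mulVec (fun w => if d3 G w = d3 G (x, y, z) then (1:ℂ) else 0) with hudef
  have hu : u ∈ U := hA3 _ hP
  have hres : (fun w => if d3 G w = d3 G (x, y, z') then u w else 0) ∈ U :=
    fiber_restrict G D θs hdle hinj U hU1 hU2 hU3 hu _ (hdle _ _) (hdle _ _) (hdle _ _)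
  have hval : u (x, y, z') = ((Finset.univ.filter (fun w' : X × X × X =>
      (x = w'.1 ∧ y = w'.2.1 ∧ G.dist z' w'.2.2 = 1) ∧ d3 G w' = d3 G (x, y, z))).card : ℂ) := by
    rw [hudef]
    simp only [Matrix.mulVec, dotProduct, A3op, Matrix.of_apply]
    rw [← Finset.sum_boole]
    refine Finset.sum_congr rfl fun w' _ => ?_
    by_cases hc1 : (x = w'.1 ∧ y = w'.2.1 ∧ G.dist z' w'.2.2 = 1)
    · by_cases hc2 : d3 G w' = d3 G (x, y, z)
      · rw [if_pos hc1, if_pos hc2, if_pos ⟨hc1, hc2⟩, mul_one]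
      · rw [if_pos hc1, if_neg hc2, mul_zero, if_neg (fun hh => hc2 hh.2)]
    · rw [if_neg hc1, zero_mul, if_neg (fun hh => hc1 hh.1)]
  have hne : u (x, y, z') ≠ 0 := by
    rw [hval, Nat.cast_ne_zero]
    apply Finset.card_ne_zero_of_mem (a := (x, y, z))
    refine Finset.mem_filter.mpr ⟨Finset.mem_univ _, ⟨rfl, rfl, ?_⟩, rfl⟩
    rwa [SimpleGraph.dist_comm]
  exact ind_mem_of_restrict G D U hUle hu (x, y, z') hres hne

lemma move2 (G : SimpleGraph X) (D : ℕ) (θs : ℕ → ℝ)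
    (hdle : ∀ x y : X, G.dist x y ≤ D)
    (hinj : ∀ i ≤ D, ∀ j ≤ D, ((θs i : ℂ)) = ((θs j : ℂ)) → i = j)
    (U : Submodule ℂ ((X × X × X) → ℂ)) (hUle : U ≤ Lam G D)
    (hU1 : ∀ v ∈ U, (As1op G θs).mulVec v ∈ U)
    (hU2 : ∀ v ∈ U, (As2op G θs).mulVec v ∈ U)
    (hU3 : ∀ v ∈ U, (As3op G θs).mulVec v ∈ U)
    (hA2 : ∀ v ∈ U, (A2op G).mulVec v ∈ U)
    (x y y' z : X) (hyy' : G.dist y y' = 1)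
    (hP : (fun w => if d3 G w = d3 G (x, y, z) then (1:ℂ) else 0) ∈ U) :
    (fun w => if d3 G w = d3 G (x, y', z) then (1:ℂ) else 0) ∈ U := by
  set u := (A2op G).mulVec (fun w => if d3 G w = d3 G (x, y, z) then (1:ℂ) else 0) with hudef
  have hu : u ∈ U := hA2 _ hP
  have hres : (fun w => if d3 G w = d3 G (x, y', z) then u w else 0) ∈ U :=
    fiber_restrict G D θs hdle hinj U hU1 hU2 hU3 hu _ (hdle _ _) (hdle _ _) (hdle _ _)
  have hval : u (x, y', z) = ((Finset.univ.filter (fun w' : X × X × X =>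
      (x = w'.1 ∧ G.dist y' w'.2.1 = 1 ∧ z = w'.2.2) ∧ d3 G w' = d3 G (x, y, z))).card : ℂ) := by
    rw [hudef]
    simp only [Matrix.mulVec, dotProduct, A2op, Matrix.of_apply]
    rw [← Finset.sum_boole]
    refine Finset.sum_congr rfl fun w' _ => ?_
    by_cases hc1 : (x = w'.1 ∧ G.dist y' w'.2.1 = 1 ∧ z = w'.2.2)
    · by_cases hc2 : d3 G w' = d3 G (x, y, z)
      · rw [if_pos hc1, if_pos hc2, if_pos ⟨hc1, hc2⟩, mul_one]
      · rw [if_pos hc1, if_neg hc2, mul_zero, if_neg (fun hh => hc2 hh.2)]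
    · rw [if_neg hc1, zero_mul, if_neg (fun hh => hc1 hh.1)]
  have hne : u (x, y', z) ≠ 0 := by
    rw [hval, Nat.cast_ne_zero]
    apply Finset.card_ne_zero_of_mem (a := (x, y, z))
    refine Finset.mem_filter.mpr ⟨Finset.mem_univ _, ⟨rfl, ?_, rfl⟩, rfl⟩
    rwa [SimpleGraph.dist_comm]
  exact ind_mem_of_restrict G D U hUle hu (x, y', z) hres hne

lemma move1 (G : SimpleGraph X) (D : ℕ) (θs : ℕ → ℝ)
    (hdle : ∀ x y : X, G.dist x y ≤ D)
    (hinj : ∀ i ≤ D, ∀ j ≤ D, ((θs i : ℂ)) = ((θs j : ℂ)) → i = j)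
    (U : Submodule ℂ ((X × X × X) → ℂ)) (hUle : U ≤ Lam G D)
    (hU1 : ∀ v ∈ U, (As1op G θs).mulVec v ∈ U)
    (hU2 : ∀ v ∈ U, (As2op G θs).mulVec v ∈ U)
    (hU3 : ∀ v ∈ U, (As3op G θs).mulVec v ∈ U)
    (hA1 : ∀ v ∈ U, (A1op G).mulVec v ∈ U)
    (x x' y z : X) (hxx' : G.dist x x' = 1)
    (hP : (fun w => if d3 G w = d3 G (x, y, z) then (1:ℂ) else 0) ∈ U) :
    (fun w => if d3 G w = d3 G (x', y, z) then (1:ℂ) else 0) ∈ U := by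
  set u := (A1op G).mulVec (fun w => if d3 G w = d3 G (x, y, z) then (1:ℂ) else 0) with hudef
  have hu : u ∈ U := hA1 _ hP
  have hres : (fun w => if d3 G w = d3 G (x', y, z) then u w else 0) ∈ U :=
    fiber_restrict G D θs hdle hinj U hU1 hU2 hU3 hu _ (hdle _ _) (hdle _ _) (hdle _ _)
  have hval : u (x', y, z) = ((Finset.univ.filter (fun w' : X × X × X =>
      (G.dist x' w'.1 = 1 ∧ y = w'.2.1 ∧ z = w'.2.2) ∧ d3 G w' = d3 G (x, y, z))).card : ℂ) := by
    rw [hudef]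
    simp only [Matrix.mulVec, dotProduct, A1op, Matrix.of_apply]
    rw [← Finset.sum_boole]
    refine Finset.sum_congr rfl fun w' _ => ?_
    by_cases hc1 : (G.dist x' w'.1 = 1 ∧ y = w'.2.1 ∧ z = w'.2.2)
    · by_cases hc2 : d3 G w' = d3 G (x, y, z)
      · rw [if_pos hc1, if_pos hc2, if_pos ⟨hc1, hc2⟩, mul_one]
      · rw [if_pos hc1, if_neg hc2, mul_zero, if_neg (fun hh => hc2 hh.2)]
    · rw [if_neg hc1, zero_mul, if_neg (fun hh => hc1 hh.1)]
  have hne : u (x', y, z) ≠ 0 := by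
    rw [hval, Nat.cast_ne_zero]
    apply Finset.card_ne_zero_of_mem (a := (x, y, z))
    refine Finset.mem_filter.mpr ⟨Finset.mem_univ _, ⟨?_, rfl, rfl⟩, rfl⟩
    rwa [SimpleGraph.dist_comm]
  exact ind_mem_of_restrict G D U hUle hu (x', y, z) hres hne

end StmtAux


/-- `Λ` is irreducible for the algebra generated by the six maps: its only subspaces
invariant under `A^{(1)},A^{(2)},A^{(3)},A^{*(1)},A^{*(2)},A^{*(3)}` are `{0}` and `Λ`. -/
theorem stmt18
    {X : Type} [Fintype X] [DecidableEq X] (G : SimpleGraph X)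
    (hX : 2 ≤ Fintype.card X) (hconn : G.Connected)
    (D : ℕ) (hD : 3 ≤ D)
    (hdle : ∀ x y : X, G.dist x y ≤ D) (hdeq : ∃ x y : X, G.dist x y = D)
    (p : ℕ → ℕ → ℕ → ℕ)
    (hreg : ∀ h i j : ℕ, h ≤ D → i ≤ D → j ≤ D → ∀ x y : X, G.dist x y = h →
      (Finset.univ.filter (fun ξ : X => G.dist x ξ = i ∧ G.dist y ξ = j)).card = p h i j)
    (hbip : ∀ i : ℕ, i ≤ D → p i 1 i = 0)
    (hantip : p 0 D D = 1)
    (E : ℕ → Matrix X X ℂ)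
    (hE0 : E 0 = (Fintype.card X : ℂ)⁻¹ • Matrix.of (fun _ _ => 1))
    (hidem : ∀ i j : ℕ, i ≤ D → j ≤ D → E i * E j = if i = j then E i else 0)
    (hherm : ∀ i : ℕ, i ≤ D → (E i).IsHermitian)
    (hEsum : ∑ i ∈ Finset.range (D + 1), E i = 1)
    (θ : ℕ → ℝ)
    (heig : ∀ i : ℕ, i ≤ D → distMat G 1 * E i = (θ i : ℂ) • E i)
    (qK : ℕ → ℕ → ℕ → ℂ)
    (hKrein : ∀ i j : ℕ, i ≤ D → j ≤ D →
      Matrix.hadamard (E i) (E j)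
        = (Fintype.card X : ℂ)⁻¹ • ∑ h ∈ Finset.range (D + 1), qK h i j • E h)
    (hQ0 : ∀ h i j : ℕ, h ≤ D → i ≤ D → j ≤ D → (i + j < h ∨ j + h < i ∨ h + i < j) → qK h i j = 0)
    (hQ1 : ∀ h i j : ℕ, h ≤ D → i ≤ D → j ≤ D → (h = i + j ∨ i = j + h ∨ j = h + i) → qK h i j ≠ 0)
    (θs : ℕ → ℝ)
    (hdual : E 1 = (Fintype.card X : ℂ)⁻¹ • ∑ i ∈ Finset.range (D + 1), (θs i : ℂ) • distMat G i)
    (hsd : ∀ i : ℕ, i ≤ D → θ i = θs i)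
    (hpq : ∀ h i j : ℕ, h ≤ D → i ≤ D → j ≤ D → qK h i j = (p h i j : ℂ))
    :
    ∀ U : Submodule ℂ ((X × X × X) → ℂ), U ≤ Lam G D →
      (∀ v, v ∈ U →
        (A1op G).mulVec v ∈ U ∧ (A2op G).mulVec v ∈ U ∧ (A3op G).mulVec v ∈ U ∧
        (As1op G θs).mulVec v ∈ U ∧ (As2op G θs).mulVec v ∈ U ∧ (As3op G θs).mulVec v ∈ U) →
      U = ⊥ ∨ U = Lam G D := by
  intro U hUle hUinv
  by_cases hbot : U = ⊥
  · exact Or.inl hbot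
  · right
    have hU1 : ∀ v ∈ U, (As1op G θs).mulVec v ∈ U := fun v hv => (hUinv v hv).2.2.2.1
    have hU2 : ∀ v ∈ U, (As2op G θs).mulVec v ∈ U := fun v hv => (hUinv v hv).2.2.2.2.1
    have hU3 : ∀ v ∈ U, (As3op G θs).mulVec v ∈ U := fun v hv => (hUinv v hv).2.2.2.2.2
    have hA1 : ∀ v ∈ U, (A1op G).mulVec v ∈ U := fun v hv => (hUinv v hv).1
    have hA2 : ∀ v ∈ U, (A2op G).mulVec v ∈ U := fun v hv => (hUinv v hv).2.1
    have hA3 : ∀ v ∈ U, (A3op G).mulVec v ∈ U := fun v hv => (hUinv v hv).2.2.1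
    have hinj : ∀ i ≤ D, ∀ j ≤ D, ((θs i : ℂ)) = ((θs j : ℂ)) → i = j := by
      intro i hi j hj hij
      have hr : θs i = θs j := by exact_mod_cast hij
      exact StmtAux.theta_inj G hconn D hdeq E hEsum θ heig i hi j hj
        (by rw [hsd i hi, hsd j hj, hr])
    obtain ⟨v, hvU, hvne⟩ := (Submodule.ne_bot_iff U).mp hbot
    obtain ⟨w0, hw0⟩ : ∃ w, v w ≠ 0 := by
      by_contra hallz
      push_neg at hallz
      exact hvne (funext fun w => hallz w)
    have hPred0 : (fun w => if StmtAux.d3 G w = StmtAux.d3 G w0 then (1:ℂ) else 0) ∈ U := by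
      have hres := StmtAux.fiber_restrict G D θs hdle hinj U hU1 hU2 hU3 hvU
        (StmtAux.d3 G w0) (hdle _ _) (hdle _ _) (hdle _ _)
      exact StmtAux.ind_mem_of_restrict G D U hUle hvU w0 hres hw0
    have hall : ∀ w : X × X × X,
        (fun w' => if StmtAux.d3 G w' = StmtAux.d3 G w then (1:ℂ) else 0) ∈ U := by
      have m3 : ∀ (x1 y1 : X) (z1 z2 : X),
          (fun w' => if StmtAux.d3 G w' = StmtAux.d3 G (x1, y1, z1) then (1:ℂ) else 0) ∈ U →
          (fun w' => if StmtAux.d3 G w' = StmtAux.d3 G (x1, y1, z2) then (1:ℂ) else 0) ∈ U := by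
        intro x1 y1 z1 z2 h
        obtain ⟨pw⟩ := hconn.preconnected z1 z2
        exact StmtAux.walk_prop
          (fun ζ => (fun w' => if StmtAux.d3 G w' = StmtAux.d3 G (x1, y1, ζ) then (1:ℂ) else 0) ∈ U)
          (fun a b hab ha => StmtAux.move3 G D θs hdle hinj U hUle hU1 hU2 hU3 hA3 x1 y1 a b
            (SimpleGraph.dist_eq_one_iff_adj.mpr hab) ha) pw h
      have m2 : ∀ (x1 z1 : X) (y1 y2 : X),
          (fun w' => if StmtAux.d3 G w' = StmtAux.d3 G (x1, y1, z1) then (1:ℂ) else 0) ∈ U →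
          (fun w' => if StmtAux.d3 G w' = StmtAux.d3 G (x1, y2, z1) then (1:ℂ) else 0) ∈ U := by
        intro x1 z1 y1 y2 h
        obtain ⟨pw⟩ := hconn.preconnected y1 y2
        exact StmtAux.walk_prop
          (fun ζ => (fun w' => if StmtAux.d3 G w' = StmtAux.d3 G (x1, ζ, z1) then (1:ℂ) else 0) ∈ U)
          (fun a b hab ha => StmtAux.move2 G D θs hdle hinj U hUle hU1 hU2 hU3 hA2 x1 a b z1
            (SimpleGraph.dist_eq_one_iff_adj.mpr hab) ha) pw h
      have m1 : ∀ (y1 z1 : X) (x1 x2 : X),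
          (fun w' => if StmtAux.d3 G w' = StmtAux.d3 G (x1, y1, z1) then (1:ℂ) else 0) ∈ U →
          (fun w' => if StmtAux.d3 G w' = StmtAux.d3 G (x2, y1, z1) then (1:ℂ) else 0) ∈ U := by
        intro y1 z1 x1 x2 h
        obtain ⟨pw⟩ := hconn.preconnected x1 x2
        exact StmtAux.walk_prop
          (fun ζ => (fun w' => if StmtAux.d3 G w' = StmtAux.d3 G (ζ, y1, z1) then (1:ℂ) else 0) ∈ U)
          (fun a b hab ha => StmtAux.move1 G D θs hdle hinj U hUle hU1 hU2 hU3 hA1 a b y1 z1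
            (SimpleGraph.dist_eq_one_iff_adj.mpr hab) ha) pw h
      obtain ⟨x0, y0, z0⟩ := w0
      rintro ⟨x, y, z⟩
      exact m1 y z x0 x (m2 x0 z y0 y (m3 x0 y0 z0 z hPred0))
    apply le_antisymm hUle
    rw [Lam, Submodule.span_le]
    rintro f ⟨⟨⟨r, s, t, u⟩, hmem⟩, rfl⟩
    simp only [SetLike.mem_coe]
    by_cases hex : ∃ w1 : X × X × X, StmtAux.d3 G w1 = (s + t, t + u, u + s)
    · obtain ⟨w1, hw1⟩ := hex
      have hBv : Bvec G r s t u
          = fun w' => if StmtAux.d3 G w' = StmtAux.d3 G w1 then (1:ℂ) else 0 := by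
        funext w'
        rw [StmtAux.Bvec_apply, hw1]
      rw [hBv]
      exact hall w1
    · have hBv : Bvec G r s t u = 0 := by
        funext w'
        rw [StmtAux.Bvec_apply, if_neg (fun h => hex ⟨w', h⟩)]
        rfl
      rw [hBv]
      exact U.zero_mem
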